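/- For y ∈ (0,1), the support of the Marčenko–Pastur law with ratio y and scale 1 is [(1−√y)², (1+√y)²], and its density p(x) = (1/(2πxy))√((b−x)(x−a)) integrates to 1 over [a,b], where a = (1−√y)², b = (1+√y)². -/

import Mathlib

open Real MeasureTheory

/-- Density (extended by 0) of the Marčenko–Pastur law with ratio `y ∈ (0,1)`, scale 1. -/
noncomputable def mpD (y x : ℝ) : ℝ :=
  if x ∈ Set.Icc ((1 - Real.sqrt y) ^ 2) ((1 + Real.sqrt y) ^ 2) then
    (1 / (2 * Real.pi * x * y)) *
      Real.sqrt (((1 + Real.sqrt y) ^ 2 - x) * (x - (1 - Real.sqrt y) ^ 2))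
  else 0

noncomputable def mpF (a b x : ℝ) : ℝ :=
  Real.sqrt ((b - x) * (x - a)) + ((a + b) / 2) * Real.arcsin ((2 * x - a - b) / (b - a))
    - Real.sqrt (a * b) * Real.arcsin (((a + b) * x - 2 * a * b) / ((b - a) * x))

lemma mpF_hasDerivAt {a b : ℝ} (ha : 0 < a) (hab : a < b) {x : ℝ} (hx : x ∈ Set.Ioo a b) :
    HasDerivAt (mpF a b) (Real.sqrt ((b - x) * (x - a)) / x) x := by
  obtain ⟨hax, hxb⟩ := hx
  have hx0 : 0 < x := lt_trans ha hax
  have hba : (0:ℝ) < b - a := by linarith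
  have hg : 0 < (b - x) * (x - a) := mul_pos (by linarith) (by linarith)
  set g := (b - x) * (x - a) with hgdef
  set t := Real.sqrt g with htdef
  set s := Real.sqrt (a * b) with hsdef
  have hst : 0 < t := Real.sqrt_pos.2 hg
  have hss : 0 < s := Real.sqrt_pos.2 (mul_pos ha (ha.trans hab))
  have hsq : t ^ 2 = g := Real.sq_sqrt hg.le
  have hsq2 : s ^ 2 = a * b := Real.sq_sqrt (mul_pos ha (ha.trans hab)).le
  -- first term
  have h1 : HasDerivAt (fun x => Real.sqrt ((b - x) * (x - a)))
      ((a + b - 2 * x) / (2 * t)) x := by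
    have hp : HasDerivAt (fun x => (b - x) * (x - a)) (a + b - 2 * x) x := by
      have := (((hasDerivAt_id x).const_sub b).mul ((hasDerivAt_id x).sub_const a))
      refine this.congr_deriv ?_
      simp only [id_eq]; ring
    simpa using hp.sqrt (ne_of_gt hg)
  -- second term: u
  have hu : HasDerivAt (fun x => (2 * x - a - b) / (b - a)) (2 / (b - a)) x := by
    have : HasDerivAt (fun x => 2 * x - a - b) 2 x := by
      simpa using (((hasDerivAt_id x).const_mul 2).sub_const a).sub_const b
    simpa using this.div_const (b - a)
  have hu1 : (2 * x - a - b) / (b - a) ≠ -1 := by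
    intro h; rw [div_eq_iff (ne_of_gt hba)] at h; nlinarith
  have hu2 : (2 * x - a - b) / (b - a) ≠ 1 := by
    intro h; rw [div_eq_iff (ne_of_gt hba)] at h; nlinarith
  have h2 : HasDerivAt (fun x => Real.arcsin ((2 * x - a - b) / (b - a)))
      ((1 / Real.sqrt (1 - ((2 * x - a - b) / (b - a)) ^ 2)) * (2 / (b - a))) x :=
    by exact (Real.hasDerivAt_arcsin hu1 hu2).comp x hu
  have hsu : Real.sqrt (1 - ((2 * x - a - b) / (b - a)) ^ 2) = 2 * t / (b - a) := by
    have he : 1 - ((2 * x - a - b) / (b - a)) ^ 2 = (2 * t / (b - a)) ^ 2 := by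
      field_simp
      linear_combination (-4) * hsq
    rw [he, Real.sqrt_sq (by positivity)]
  -- third term: v
  have hv : HasDerivAt (fun x => ((a + b) * x - 2 * a * b) / ((b - a) * x))
      (2 * a * b / ((b - a) * x ^ 2)) x := by
    have hN : HasDerivAt (fun x => (a + b) * x - 2 * a * b) (a + b) x := by
      simpa using ((hasDerivAt_id x).const_mul (a + b)).sub_const (2 * a * b)
    have hD : HasDerivAt (fun x => (b - a) * x) (b - a) x := by
      simpa using (hasDerivAt_id x).const_mul (b - a)
    have := hN.div hD (by positivity)
    refine this.congr_deriv ?_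
    rw [div_eq_div_iff (by positivity) (by positivity)]
    ring
  have hv1 : ((a + b) * x - 2 * a * b) / ((b - a) * x) ≠ -1 := by
    intro h; rw [div_eq_iff (by positivity)] at h; nlinarith
  have hv2 : ((a + b) * x - 2 * a * b) / ((b - a) * x) ≠ 1 := by
    intro h; rw [div_eq_iff (by positivity)] at h; nlinarith
  have h3 : HasDerivAt (fun x => Real.arcsin (((a + b) * x - 2 * a * b) / ((b - a) * x)))
      ((1 / Real.sqrt (1 - (((a + b) * x - 2 * a * b) / ((b - a) * x)) ^ 2))
        * (2 * a * b / ((b - a) * x ^ 2))) x :=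
    by exact (Real.hasDerivAt_arcsin hv1 hv2).comp x hv
  have hsv : Real.sqrt (1 - (((a + b) * x - 2 * a * b) / ((b - a) * x)) ^ 2)
      = 2 * s * t / ((b - a) * x) := by
    have he : 1 - (((a + b) * x - 2 * a * b) / ((b - a) * x)) ^ 2
        = (2 * s * t / ((b - a) * x)) ^ 2 := by
      field_simp
      linear_combination (-4 * t ^ 2) * hsq2 + (-4 * a * b) * hsq
    rw [he, Real.sqrt_sq (by positivity)]
  -- combine
  have hF : HasDerivAt (mpF a b)
      ((a + b - 2 * x) / (2 * t)
        + (a + b) / 2 * ((1 / Real.sqrt (1 - ((2 * x - a - b) / (b - a)) ^ 2)) * (2 / (b - a)))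
        - s * ((1 / Real.sqrt (1 - (((a + b) * x - 2 * a * b) / ((b - a) * x)) ^ 2))
            * (2 * a * b / ((b - a) * x ^ 2)))) x :=
    (h1.add (h2.const_mul ((a + b) / 2))).sub (h3.const_mul s)
  convert hF using 1
  rw [hsu, hsv]
  have hB : (a + b) / 2 * (1 / (2 * t / (b - a)) * (2 / (b - a))) = (a + b) / (2 * t) := by
    field_simp
  have hC : s * (1 / (2 * s * t / ((b - a) * x)) * (2 * a * b / ((b - a) * x ^ 2)))
      = a * b / (t * x) := by
    field_simp
  rw [hB, hC]
  field_simp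
  linear_combination 2 * hsq + 2 * hgdef

lemma mpF_continuousOn {a b : ℝ} (ha : 0 < a) (hab : a < b) :
    ContinuousOn (mpF a b) (Set.Icc a b) := by
  unfold mpF
  apply ContinuousOn.sub
  · apply ContinuousOn.add
    · exact (Real.continuous_sqrt.comp (by continuity)).continuousOn
    · exact (continuous_const.mul (Real.continuous_arcsin.comp (by continuity))).continuousOn
  · apply ContinuousOn.mul continuousOn_const
    apply Real.continuous_arcsin.comp_continuousOn
    have hnum : Continuous fun x : ℝ => (a + b) * x - 2 * a * b := by continuity
    have hden : Continuous fun x : ℝ => (b - a) * x := by continuity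
    apply ContinuousOn.div hnum.continuousOn hden.continuousOn
    intro x hx
    have hx0 : 0 < x := lt_of_lt_of_le ha hx.1
    have hba : (0:ℝ) < b - a := by linarith
    positivity

lemma key_integral {a b : ℝ} (ha : 0 < a) (hab : a < b) :
    ∫ x in a..b, Real.sqrt ((b - x) * (x - a)) / x
      = Real.pi * (a + b) / 2 - Real.pi * Real.sqrt (a * b) := by
  have hcont : ContinuousOn (fun x => Real.sqrt ((b - x) * (x - a)) / x) (Set.Icc a b) := by
    apply ContinuousOn.div (Real.continuous_sqrt.comp (by continuity)).continuousOn
      continuousOn_id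
    intro x hx
    exact ne_of_gt (lt_of_lt_of_le ha hx.1)
  have hint : IntervalIntegrable (fun x => Real.sqrt ((b - x) * (x - a)) / x)
      volume a b := by
    apply ContinuousOn.intervalIntegrable
    rwa [Set.uIcc_of_le hab.le]
  have := intervalIntegral.integral_eq_sub_of_hasDerivAt_of_le hab.le
      (mpF_continuousOn ha hab) (fun x hx => mpF_hasDerivAt ha hab hx) hint
  rw [this]
  have hb0 : (0:ℝ) < b := ha.trans hab
  have hba : (0:ℝ) < b - a := by linarith
  have h1 : (2 * b - a - b) / (b - a) = 1 := by
    rw [div_eq_one_iff_eq (by intro h; nlinarith)]; ring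
  have h2 : ((a + b) * b - 2 * a * b) / ((b - a) * b) = 1 := by
    rw [div_eq_one_iff_eq (mul_pos hba hb0).ne']; ring
  have h3 : (2 * a - a - b) / (b - a) = -1 := by
    rw [div_eq_iff (by intro h; nlinarith)]; ring
  have h4 : ((a + b) * a - 2 * a * b) / ((b - a) * a) = -1 := by
    rw [div_eq_iff (mul_pos hba ha).ne']; ring
  unfold mpF
  rw [h1, h2, h3, h4, Real.arcsin_one, Real.arcsin_neg_one]
  have : (b - b) * (b - a) = 0 := by ring
  rw [this]
  have : (b - a) * (a - a) = 0 := by ring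
  rw [this, Real.sqrt_zero]
  ring

/-- For `y ∈ (0,1)`, the Marčenko–Pastur density integrates to 1 and its support is
`[(1-√y)², (1+√y)²]`. -/
theorem mp_density_support_and_mass (y : ℝ) (hy : y ∈ Set.Ioo (0 : ℝ) 1) :
    (∫ x, mpD y x) = 1 ∧
    closure {x | mpD y x ≠ 0} =
      Set.Icc ((1 - Real.sqrt y) ^ 2) ((1 + Real.sqrt y) ^ 2) := by
  obtain ⟨hy0, hy1⟩ := hy
  set s := Real.sqrt y with hsdef
  have hs0 : 0 < s := Real.sqrt_pos.2 hy0
  have hs1 : s < 1 := by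
    rw [hsdef, show (1:ℝ) = Real.sqrt 1 by simp]
    exact Real.sqrt_lt_sqrt hy0.le hy1
  have hs2 : s ^ 2 = y := Real.sq_sqrt hy0.le
  set a := (1 - s) ^ 2 with hadef
  set b := (1 + s) ^ 2 with hbdef
  have ha : 0 < a := pow_pos (by linarith) 2
  have hab : a < b := by rw [hadef, hbdef]; nlinarith
  have hb0 : 0 < b := ha.trans hab
  -- mass
  have hmass : (∫ x, mpD y x) = 1 := by
    have hind : mpD y = Set.indicator (Set.Icc a b)
        (fun x => (1 / (2 * Real.pi * x * y)) * Real.sqrt ((b - x) * (x - a))) := by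
      funext x
      rw [mpD, Set.indicator]
      split_ifs <;> rfl
    rw [hind, MeasureTheory.integral_indicator measurableSet_Icc,
      MeasureTheory.integral_Icc_eq_integral_Ioc,
      ← intervalIntegral.integral_of_le hab.le]
    have hcongr : ∀ x : ℝ, (1 / (2 * Real.pi * x * y)) * Real.sqrt ((b - x) * (x - a))
        = (1 / (2 * Real.pi * y)) * (Real.sqrt ((b - x) * (x - a)) / x) := by
      intro x
      rcases eq_or_ne x 0 with rfl | hx
      · simp
      · rw [mul_comm, mul_one_div, mul_comm (1 / (2 * Real.pi * y)), mul_one_div, div_div]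
        ring_nf
    rw [intervalIntegral.integral_congr (fun x _ => hcongr x),
      intervalIntegral.integral_const_mul, key_integral ha hab]
    have hab2 : a * b = (1 - s ^ 2) ^ 2 := by rw [hadef, hbdef]; ring
    have hsab : Real.sqrt (a * b) = 1 - y := by
      rw [hab2, Real.sqrt_sq (by nlinarith), hs2]
    rw [hsab]
    have hsum : a + b = 2 * (1 + y) := by rw [hadef, hbdef, ← hs2]; ring
    rw [hsum]
    have hpi : Real.pi ≠ 0 := Real.pi_ne_zero
    field_simp
    ring
  refine ⟨hmass, ?_⟩
  -- support
  have hset : {x | mpD y x ≠ 0} = Set.Ioo a b := by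
    ext x
    simp only [Set.mem_setOf_eq, mpD]
    constructor
    · intro h
      by_contra hx
      apply h
      by_cases hicc : x ∈ Set.Icc a b
      · rw [if_pos hicc]
        have : x = a ∨ x = b := by
          rcases hicc with ⟨h1, h2⟩
          rw [Set.mem_Ioo] at hx
          push_neg at hx
          rcases lt_or_eq_of_le h1 with h1' | h1'
          · right; exact le_antisymm h2 (hx h1')
          · left; exact h1'.symm
        rcases this with rfl | rfl
        · simp
          right; rw [← hsdef, ← hadef, ← hbdef]; simp
        · simp
          right; rw [← hsdef, ← hadef, ← hbdef]; simp
      · rw [if_neg hicc]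
    · intro hx
      rw [if_pos (Set.Ioo_subset_Icc_self hx)]
      obtain ⟨h1, h2⟩ := hx
      have hx0 : 0 < x := ha.trans h1
      have hgt : 0 < (b - x) * (x - a) := mul_pos (by linarith) (by linarith)
      have h5 : 0 < 1 / (2 * Real.pi * x * y) := by
        have := Real.pi_pos
        positivity
      positivity
  rw [hset, closure_Ioo hab.ne]
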